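/- arXiv:1508.07289 — 4 statements merged into one kernel-verified Lean document; each statement's English description precedes it below -/
import Mathlib

section
/- Let 0 < a < 1 and let k be a natural number with k ≥ exp(1/a). Define for each i with 1 ≤ i ≤ k the function f_i(t) = i·t − i·a·H_{i−1}, where H_j is the j-th harmonic number. Then for every t ∈ [0, 1] there exists i with 1 ≤ i ≤ k such that f_i(t) mod 1 ∈ [0, a]. -/
noncomputable def H (n : ℕ) : ℝ := ∑ i ∈ Finset.range n, 1 / (i + 1 : ℝ)

lemma H_succ (n : ℕ) : H (n + 1) = H n + 1 / ((n : ℝ) + 1) :=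
  Finset.sum_range_succ _ _

lemma log_le_H (n : ℕ) : Real.log ((n : ℝ) + 1) ≤ H n := by
  induction n with
  | zero => simp [H]
  | succ n ih =>
    have h1 : (0:ℝ) < (n:ℝ) + 1 := by positivity
    have key : Real.log (((n:ℝ)+2)/((n:ℝ)+1)) ≤ 1/((n:ℝ)+1) := by
      have h := Real.log_le_sub_one_of_pos (x := ((n:ℝ)+2)/((n:ℝ)+1)) (by positivity)
      have heq : ((n:ℝ)+2)/((n:ℝ)+1) - 1 = 1/((n:ℝ)+1) := by field_simp; norm_num
      linarith [h, heq.le]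
    have hsplit : Real.log ((n:ℝ)+2) = Real.log ((n:ℝ)+1) + Real.log (((n:ℝ)+2)/((n:ℝ)+1)) := by
      rw [← Real.log_mul (by positivity) (by positivity)]
      congr 1; field_simp
    have : Real.log ((↑(n+1):ℝ) + 1) ≤ H (n+1) := by
      rw [H_succ]
      push_cast
      have : Real.log ((n:ℝ)+1+1) = Real.log ((n:ℝ)+2) := by congr 1; ring
      rw [this, hsplit]
      linarith
    exact this

theorem covering_on_period (a : ℝ) (ha0 : 0 < a) (ha1 : a < 1) (k : ℕ)
    (hk : (k : ℝ) ≥ Real.exp (1 / a)) :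
    ∀ t ∈ Set.Icc (0 : ℝ) 1, ∃ i : ℕ, 1 ≤ i ∧ i ≤ k ∧
      Int.fract ((i : ℝ) * t - (i : ℝ) * a * H (i - 1)) ∈ Set.Icc 0 a := by
  intro t ht
  have ha' : (0:ℝ) < 1/a := by positivity
  have hexp1 : (1:ℝ) < Real.exp (1/a) := by
    have := Real.add_one_le_exp (1/a)
    linarith
  have hk1 : 1 ≤ k := by
    by_contra h
    push_neg at h
    interval_cases k
    · simp at hk; linarith [Real.exp_pos a⁻¹]
  have hkpos : (0:ℝ) < (k:ℝ) := by
    exact_mod_cast Nat.pos_of_ne_zero (by omega)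
  have hHk : 1/a ≤ H k := by
    have h3 : Real.log (Real.exp (1/a)) ≤ Real.log (k:ℝ) :=
      Real.log_le_log (Real.exp_pos _) hk
    have h4 : Real.log (k:ℝ) ≤ Real.log ((k:ℝ)+1) :=
      Real.log_le_log hkpos (by linarith)
    have := log_le_H k
    rw [Real.log_exp] at h3
    linarith
  have htk : t ≤ a * H k := by
    have h1 : a * (1/a) ≤ a * H k := mul_le_mul_of_nonneg_left hHk ha0.le
    have h2 : a * (1/a) = 1 := by field_simp
    linarith [ht.2]
  have hex : ∃ m : ℕ, t ≤ a * H (m + 1) := by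
    refine ⟨k - 1, ?_⟩
    have : k - 1 + 1 = k := by omega
    rw [this]; exact htk
  set m := Nat.find hex with hm_def
  have hm : t ≤ a * H (m + 1) := Nat.find_spec hex
  have hmk : m ≤ k - 1 := by
    apply Nat.find_min' hex
    have : k - 1 + 1 = k := by omega
    rw [this]; exact htk
  have hlow : a * H m ≤ t := by
    rcases Nat.eq_zero_or_pos m with h0 | hpos
    · rw [h0]; simp [H]; exact ht.1
    · have hmin := Nat.find_min hex (m := m - 1) (by omega)
      have heq : m - 1 + 1 = m := by omega
      rw [heq] at hmin
      linarith [not_le.mp hmin]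
  refine ⟨m + 1, le_add_self, by omega, ?_⟩
  have hdm : m + 1 - 1 = m := by omega
  rw [hdm]
  set x := ((m + 1 : ℕ) : ℝ) * t - ((m + 1 : ℕ) : ℝ) * a * H m with hx
  have hcast : ((m + 1 : ℕ) : ℝ) = (m:ℝ) + 1 := by push_cast; ring
  have hipos : (0:ℝ) < (m:ℝ) + 1 := by positivity
  have hx0 : 0 ≤ x := by
    rw [hx, hcast]
    nlinarith
  have hxa : x ≤ a := by
    rw [hx, hcast]
    have h5 : t ≤ a * (H m + 1/((m:ℝ)+1)) := by rw [← H_succ]; exact hm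
    have h6 : ((m:ℝ)+1) * t ≤ ((m:ℝ)+1) * (a * (H m + 1/((m:ℝ)+1))) :=
      mul_le_mul_of_nonneg_left h5 hipos.le
    have h7 : ((m:ℝ)+1) * (a * (H m + 1/((m:ℝ)+1))) = ((m:ℝ)+1) * a * H m + a := by
      field_simp
    linarith
  rw [Int.fract_eq_self.mpr ⟨hx0, lt_of_le_of_lt hxa ha1⟩]
  exact ⟨hx0, hxa⟩
end

section
/- If real numbers ξ_1, ..., ξ_k are rationally independent (linearly independent over ℚ), α_1, ..., α_k are arbitrary reals, and T, ε > 0, then there exists a real t > T and integers p_1, ..., p_k such that |t·ξ_m − p_m − α_m| ≤ ε for all m = 1, ..., k. -/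
open Finset Real

lemma aux_cos (ε x : ℝ) (hε : 0 < ε) (hε2 : ε < 1/2)
    (h : ε < |x - round x|) : Real.cos (2*π*x) ≤ Real.cos (2*π*ε) := by
  set y := x - round x with hy
  have h1 : |y| ≤ 1/2 := abs_sub_round x
  have : Real.cos (2*π*x) = Real.cos (2*π*y) := by
    have : 2*π*x = 2*π*y + (round x) * (2*π) := by rw [hy]; ring
    rw [this, Real.cos_add_int_mul_two_pi]
  rw [this, ← Real.cos_abs (2*π*y)]
  have hπ := Real.pi_pos
  have habs : |2*π*y| = 2*π*|y| := by
    rw [abs_mul]; congr 1; rw [abs_of_pos]; positivity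
  rw [habs]
  apply Real.cos_le_cos_of_nonneg_of_le_pi (by positivity) (by nlinarith) (by nlinarith)

lemma aux_int (c d T S : ℝ) (hc : c ≠ 0) :
    ‖∫ t in T..(T+S), Complex.exp ((↑(t * c - d)) * Complex.I)‖ ≤ 2/|c| := by
  have h1 : ∀ t : ℝ, Complex.exp (((t * c - d : ℝ)) * Complex.I)
      = Complex.exp ((-d : ℝ) * Complex.I) * Complex.exp ((c * Complex.I) * t) := by
    intro t
    rw [← Complex.exp_add]
    congr 1
    push_cast
    ring
  rw [intervalIntegral.integral_congr (g := fun t => Complex.exp ((-d : ℝ) * Complex.I) * Complex.exp ((c * Complex.I) * t)) (fun t _ => h1 t)]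
  rw [intervalIntegral.integral_const_mul, integral_exp_mul_complex (by simp [hc, Complex.I_ne_zero])]
  rw [norm_mul]
  have e2 : ∀ x : ℝ, ‖Complex.exp ((c:ℂ) * Complex.I * ↑x)‖ = 1 := by
    intro x
    have : (c : ℂ) * Complex.I * x = ((c*x : ℝ) : ℂ) * Complex.I := by push_cast; ring
    rw [this]
    exact Complex.norm_exp_ofReal_mul_I _
  have e1 : ‖Complex.exp ((-d : ℝ) * Complex.I)‖ = 1 := by
    exact_mod_cast Complex.norm_exp_ofReal_mul_I (-d)
  rw [e1, one_mul, norm_div]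
  have e3 : ‖(c : ℂ) * Complex.I‖ = |c| := by
    rw [norm_mul, Complex.norm_I, mul_one, Complex.norm_real, Real.norm_eq_abs]
  rw [e3]
  apply div_le_div_of_nonneg_right ?_ (abs_pos.mpr hc).le
  calc ‖Complex.exp ((c:ℂ) * Complex.I * (T+S:ℝ)) - Complex.exp ((c:ℂ) * Complex.I * (T:ℝ))‖
      ≤ ‖Complex.exp ((c:ℂ) * Complex.I * (T+S:ℝ))‖ + ‖Complex.exp ((c:ℂ) * Complex.I * (T:ℝ))‖ := norm_sub_le _ _
    _ ≤ 2 := by rw [e2, e2]; norm_num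
namespace KronAux
variable {k : ℕ}

noncomputable def w (ξ : Fin k → ℝ) : Option (Fin k) → ℝ := fun o => o.elim 0 (fun m => 2*π*ξ m)

noncomputable def z (ξ α : Fin k → ℝ) (t : ℝ) (o : Option (Fin k)) : ℂ :=
  Complex.exp ((↑(t * w ξ o - w α o)) * Complex.I)

noncomputable def F (ξ α : Fin k → ℝ) (t : ℝ) : ℂ := ∑ o, z ξ α t o

def cnt (p : ℕ) (u : Fin p → Option (Fin k)) (m : Option (Fin k)) : ℕ :=
  (univ.filter (fun j => u j = m)).card

def A (h : Option (Fin k) → ℝ) {p : ℕ} (u : Fin p → Option (Fin k)) : ℝ := ∑ j, h (u j)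

lemma A_eq_sum_cnt (h : Option (Fin k) → ℝ) {p : ℕ} (u : Fin p → Option (Fin k)) :
    A h u = ∑ m, (cnt p u m : ℝ) * h m := by
  rw [A, ← Finset.sum_fiberwise univ u (fun j => h (u j))]
  refine Finset.sum_congr rfl fun m _ => ?_
  have : ∀ j ∈ univ.filter (fun j => u j = m), h (u j) = h m := fun j hj => by
    rw [(Finset.mem_filter.mp hj).2]
  rw [Finset.sum_congr rfl this, Finset.sum_const, cnt, nsmul_eq_mul]

lemma sum_cnt (p : ℕ) (y : Fin p → Option (Fin k)) : ∑ m : Option (Fin k), cnt p y m = p := by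
  simp only [cnt]
  rw [← Finset.card_eq_sum_card_fiberwise (fun j _ => mem_univ (y j))]
  simp

lemma cnt_eq_of_A_eq (ξ : Fin k → ℝ) (hξ : LinearIndependent ℚ ξ) {p : ℕ}
    (u v : Fin p → Option (Fin k)) (hA : A (w ξ) u = A (w ξ) v) : cnt p u = cnt p v := by
  have hπ := Real.pi_pos
  have key : ∀ m : Fin k, cnt p u (some m) = cnt p v (some m) := by
    have h2 : ∑ m : Fin k, (((cnt p u (some m) : ℚ) - cnt p v (some m) : ℚ) : ℝ) * ξ m = 0 := by
      rw [A_eq_sum_cnt, A_eq_sum_cnt, Fintype.sum_option, Fintype.sum_option] at hA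
      simp only [w, Option.elim] at hA
      have h3 : ∑ m : Fin k, (((cnt p u (some m) : ℚ) - (cnt p v (some m) : ℚ) : ℚ) : ℝ) * ξ m * (2*π) = 0 := by
        push_cast
        rw [Finset.sum_congr rfl (fun m _ => by ring :
          ∀ m ∈ univ, ((cnt p u (some m) : ℝ) - (cnt p v (some m):ℝ)) * ξ m * (2*π)
            = (cnt p u (some m) : ℝ) * (2*π*ξ m) - (cnt p v (some m):ℝ) * (2*π*ξ m)),
          Finset.sum_sub_distrib]
        rw [mul_zero, mul_zero] at hA
        linarith [hA]
      have := Finset.sum_mul univ (fun m => (((cnt p u (some m) : ℚ) - cnt p v (some m) : ℚ) : ℝ) * ξ m) ((2*π : ℝ))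
      rw [← this] at h3
      have h2π : (2*π : ℝ) ≠ 0 := by positivity
      exact (mul_eq_zero.mp h3).resolve_right h2π
    intro m
    have := Fintype.linearIndependent_iff.mp hξ
      (fun m => (cnt p u (some m) : ℚ) - cnt p v (some m)) ?_ m
    · exact_mod_cast sub_eq_zero.mp this
    · rw [← h2]
      exact Finset.sum_congr rfl fun m _ => (Rat.smul_def _ _)
  funext m
  match m with
  | some m => exact key m
  | none =>
      have hu := sum_cnt p u
      have hv := sum_cnt p v
      rw [Fintype.sum_option] at hu hv
      have : ∑ i : Fin k, cnt p u (some i) = ∑ i : Fin k, cnt p v (some i) :=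
        Finset.sum_congr rfl (fun i _ => key i)
      omega

lemma A_eq_of_cnt_eq (h : Option (Fin k) → ℝ) {p : ℕ}
    (u v : Fin p → Option (Fin k)) (hc : cnt p u = cnt p v) : A h u = A h v := by
  rw [A_eq_sum_cnt, A_eq_sum_cnt, hc]


def Dset (k p : ℕ) : Finset ((Fin p → Option (Fin k)) × (Fin p → Option (Fin k))) :=
  univ.filter (fun uv => cnt p uv.1 = cnt p uv.2)

lemma count_lb (k p : ℕ) : ((k+1 : ℝ))^(2*p) ≤ ((p+1 : ℝ))^(k+1) * ((Dset k p).card) := by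
  classical
  set im := (univ : Finset (Fin p → Option (Fin k))).image (cnt p) with him
  set N : (Option (Fin k) → ℕ) → ℕ := fun y => (univ.filter (fun u => cnt p u = y)).card with hN
  have step1 : (Dset k p).card = ∑ y ∈ im, (N y)^2 := by
    rw [Dset, Finset.card_eq_sum_card_fiberwise
      (f := fun uv => cnt p uv.1) (t := im) (fun uv _ => mem_image_of_mem _ (mem_univ _))]
    refine Finset.sum_congr rfl fun y hy => ?_
    have he : (univ.filter (fun uv : (Fin p → Option (Fin k)) × (Fin p → Option (Fin k)) =>
          cnt p uv.1 = cnt p uv.2)).filter (fun uv => cnt p uv.1 = y)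
        = (univ.filter (fun u => cnt p u = y)) ×ˢ (univ.filter (fun u => cnt p u = y)) := by
      ext uv
      simp only [mem_filter, mem_product, mem_univ, true_and]
      constructor
      · rintro ⟨h1, h2⟩; exact ⟨h2, h1.symm.trans h2⟩
      · rintro ⟨h1, h2⟩; exact ⟨h1.trans h2.symm, h1⟩
    rw [he, Finset.card_product, sq]
  have step2 : ∑ y ∈ im, N y = (k+1)^p := by
    rw [← Finset.card_eq_sum_card_fiberwise
      (f := cnt p) (s := univ) (t := im) (fun u _ => mem_image_of_mem _ (mem_univ _))]
    simp [Fintype.card_fun]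
  have step3 : (im.card : ℝ) ≤ ((p+1:ℝ))^(k+1) := by
    have hle : ∀ y ∈ im, ∀ m, y m ≤ p := by
      intro y hy m
      obtain ⟨u, -, rfl⟩ := mem_image.mp hy
      simpa [cnt] using (Finset.card_filter_le univ (fun j => u j = m)).trans_eq (by simp)
    have hinj : (im.card) ≤ (univ : Finset (Option (Fin k) → Fin (p+1))).card := by
      apply Finset.card_le_card_of_injOn (fun y m => (⟨min (y m) p, by omega⟩ : Fin (p+1)))
        (fun y _ => mem_univ _)
      intro y hy y' hy' heq
      funext m
      have h1 := hle y (by simpa using hy) m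
      have h2 := hle y' (by simpa using hy') m
      have := congrFun heq m
      simp only [Fin.mk.injEq] at this
      omega
    calc (im.card : ℝ) ≤ ((univ : Finset (Option (Fin k) → Fin (p+1))).card : ℝ) := by exact_mod_cast hinj
      _ = ((p+1:ℝ))^(k+1) := by simp [Fintype.card_fun]
  have cs := sq_sum_le_card_mul_sum_sq (s := im) (f := fun y => (N y : ℝ))
  have e1 : (∑ y ∈ im, (N y : ℝ)) = ((k+1:ℝ))^p := by
    rw [← Nat.cast_sum]; exact_mod_cast congrArg (Nat.cast : ℕ → ℝ) step2
  have e2 : (∑ y ∈ im, (N y : ℝ)^2) = ((Dset k p).card : ℝ) := by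
    rw [step1]; push_cast; ring
  rw [e1, e2] at cs
  calc ((k+1 : ℝ))^(2*p) = (((k+1:ℝ))^p)^2 := by rw [← pow_mul, mul_comm]
    _ ≤ im.card * ((Dset k p).card : ℝ) := cs
    _ ≤ ((p+1:ℝ))^(k+1) * ((Dset k p).card : ℝ) := by
        apply mul_le_mul_of_nonneg_right step3 (by positivity)


lemma conjz (r : ℝ) : (starRingEnd ℂ) (Complex.exp (↑r * Complex.I)) = Complex.exp ((↑(-r)) * Complex.I) := by
  rw [← Complex.exp_conj, map_mul, Complex.conj_ofReal, Complex.conj_I]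
  push_cast
  ring_nf

lemma prodz (ξ α : Fin k → ℝ) (t : ℝ) {p : ℕ} (u : Fin p → Option (Fin k)) :
    ∏ j, z ξ α t (u j) = Complex.exp ((↑(t * A (w ξ) u - A (w α) u)) * Complex.I) := by
  simp only [z]
  rw [← Complex.exp_sum]
  congr 1
  rw [← Finset.sum_mul]
  congr 1
  rw [← Complex.ofReal_sum]
  congr 1
  rw [A, A, Finset.mul_sum, ← Finset.sum_sub_distrib]

lemma Gexpand (ξ α : Fin k → ℝ) (t : ℝ) (p : ℕ) :
    (F ξ α t)^p * (starRingEnd ℂ) ((F ξ α t)^p)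
      = ∑ uv : (Fin p → Option (Fin k)) × (Fin p → Option (Fin k)),
          Complex.exp ((↑(t * (A (w ξ) uv.1 - A (w ξ) uv.2) - (A (w α) uv.1 - A (w α) uv.2))) * Complex.I) := by
  rw [F, Fintype.sum_pow, map_sum, Finset.sum_mul_sum,
    Fintype.sum_prod_type (f := fun uv : (Fin p → Option (Fin k)) × (Fin p → Option (Fin k)) =>
      Complex.exp ((↑(t * (A (w ξ) uv.1 - A (w ξ) uv.2) - (A (w α) uv.1 - A (w α) uv.2))) * Complex.I))]
  refine Finset.sum_congr rfl fun u _ => Finset.sum_congr rfl fun v _ => ?_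
  rw [prodz, prodz, conjz, ← Complex.exp_add]
  congr 1
  rw [← add_mul]
  congr 1
  push_cast
  ring

lemma term_integrable (c d T S : ℝ) :
    IntervalIntegrable (fun t : ℝ => Complex.exp ((↑(t * c - d)) * Complex.I))
      MeasureTheory.volume T (T+S) := by
  apply Continuous.intervalIntegrable
  exact Complex.continuous_exp.comp
    ((Complex.continuous_ofReal.comp
      ((continuous_id.mul continuous_const).sub continuous_const)).mul continuous_const)

lemma analytic (ξ α : Fin k → ℝ) (hξ : LinearIndependent ℚ ξ) (T Msq : ℝ)
    (hM : ∀ t, T < t → Complex.normSq (F ξ α t) ≤ Msq) (p : ℕ) :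
    ((Dset k p).card : ℝ) ≤ Msq ^ p := by
  classical
  set fr : (Fin p → Option (Fin k)) × (Fin p → Option (Fin k)) → ℝ :=
    fun uv => A (w ξ) uv.1 - A (w ξ) uv.2 with hfr
  set db : (Fin p → Option (Fin k)) × (Fin p → Option (Fin k)) → ℝ :=
    fun uv => A (w α) uv.1 - A (w α) uv.2 with hdb
  set C : ℝ := ∑ uv ∈ univ.filter
    (fun uv : (Fin p → Option (Fin k)) × (Fin p → Option (Fin k)) => ¬ cnt p uv.1 = cnt p uv.2),
    2 / |fr uv| with hC
  have hC0 : 0 ≤ C := Finset.sum_nonneg (fun uv _ => by positivity)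
  have key : ∀ S : ℝ, 0 < S → ((Dset k p).card : ℝ) * S ≤ Msq^p * S + C := by
    intro S hS
    have hint : (∫ t in T..(T+S), (F ξ α t)^p * (starRingEnd ℂ) ((F ξ α t)^p))
        = ∑ uv : (Fin p → Option (Fin k)) × (Fin p → Option (Fin k)),
            ∫ t in T..(T+S), Complex.exp ((↑(t * fr uv - db uv)) * Complex.I) := by
      rw [intervalIntegral.integral_congr
        (g := fun t => ∑ uv : (Fin p → Option (Fin k)) × (Fin p → Option (Fin k)),
          Complex.exp ((↑(t * fr uv - db uv)) * Complex.I)) (fun t _ => by rw [Gexpand])]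
      exact intervalIntegral.integral_finset_sum (fun uv _ => term_integrable (fr uv) (db uv) T S)
    have hone : ∀ uv ∈ univ.filter
        (fun uv : (Fin p → Option (Fin k)) × (Fin p → Option (Fin k)) => cnt p uv.1 = cnt p uv.2),
        (∫ t in T..(T+S), Complex.exp ((↑(t * fr uv - db uv)) * Complex.I)) = (S:ℂ) := by
      intro uv huv
      have hcnt := (Finset.mem_filter.mp huv).2
      have h1 : fr uv = 0 := by
        rw [hfr]; exact sub_eq_zero.mpr (A_eq_of_cnt_eq _ _ _ hcnt)
      have h2 : db uv = 0 := by
        rw [hdb]; exact sub_eq_zero.mpr (A_eq_of_cnt_eq _ _ _ hcnt)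
      rw [intervalIntegral.integral_congr (g := fun _ => (1:ℂ))
        (fun t _ => by simp [h1, h2])]
      rw [intervalIntegral.integral_const]
      push_cast
      simp
    have hDsum : ∑ uv ∈ univ.filter
        (fun uv : (Fin p → Option (Fin k)) × (Fin p → Option (Fin k)) => cnt p uv.1 = cnt p uv.2),
        (∫ t in T..(T+S), Complex.exp ((↑(t * fr uv - db uv)) * Complex.I))
        = ((Dset k p).card : ℂ) * S := by
      rw [Finset.sum_congr rfl hone, Finset.sum_const, nsmul_eq_mul]
      rfl
    have hGnorm : ‖∫ t in T..(T+S), (F ξ α t)^p * (starRingEnd ℂ) ((F ξ α t)^p)‖ ≤ Msq^p * S := by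
      have hb : ∀ t ∈ Set.uIoc T (T+S), ‖(F ξ α t)^p * (starRingEnd ℂ) ((F ξ α t)^p)‖ ≤ Msq^p := by
        intro t ht
        rw [Set.uIoc_of_le (by linarith)] at ht
        have hnorm : ‖(F ξ α t)^p * (starRingEnd ℂ) ((F ξ α t)^p)‖
            = Complex.normSq (F ξ α t) ^ p := by
          rw [norm_mul, RCLike.norm_conj, norm_pow, ← mul_pow,
            ← sq, Complex.sq_norm]
        rw [hnorm]
        exact pow_le_pow_left₀ (Complex.normSq_nonneg _) (hM t ht.1) p
      calc ‖∫ t in T..(T+S), (F ξ α t)^p * (starRingEnd ℂ) ((F ξ α t)^p)‖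
          ≤ Msq^p * |T+S-T| := intervalIntegral.norm_integral_le_of_norm_le_const hb
        _ = Msq^p * S := by rw [show T+S-T = S by ring, abs_of_pos hS]
    have hNsum : ‖∑ uv ∈ univ.filter
        (fun uv : (Fin p → Option (Fin k)) × (Fin p → Option (Fin k)) => ¬ cnt p uv.1 = cnt p uv.2),
        (∫ t in T..(T+S), Complex.exp ((↑(t * fr uv - db uv)) * Complex.I))‖ ≤ C := by
      refine (norm_sum_le _ _).trans ?_
      rw [hC]
      refine Finset.sum_le_sum fun uv huv => ?_
      have hcnt := (Finset.mem_filter.mp huv).2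
      have hfr0 : fr uv ≠ 0 := fun h0 => hcnt (cnt_eq_of_A_eq ξ hξ _ _ (sub_eq_zero.mp h0))
      exact aux_int _ _ _ _ hfr0
    have heq : ((Dset k p).card : ℂ) * S
        = (∫ t in T..(T+S), (F ξ α t)^p * (starRingEnd ℂ) ((F ξ α t)^p))
          - ∑ uv ∈ univ.filter
            (fun uv : (Fin p → Option (Fin k)) × (Fin p → Option (Fin k)) => ¬ cnt p uv.1 = cnt p uv.2),
            (∫ t in T..(T+S), Complex.exp ((↑(t * fr uv - db uv)) * Complex.I)) := by
      rw [hint, ← Finset.sum_filter_add_sum_filter_not univ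
        (fun uv : (Fin p → Option (Fin k)) × (Fin p → Option (Fin k)) => cnt p uv.1 = cnt p uv.2),
        hDsum]
      ring
    calc ((Dset k p).card : ℝ) * S = ‖((Dset k p).card : ℂ) * (S:ℂ)‖ := by
          rw [norm_mul, Complex.norm_natCast, Complex.norm_real, Real.norm_eq_abs, abs_of_pos hS]
      _ ≤ _ := by
          rw [heq]
          exact (norm_sub_le _ _).trans (add_le_add hGnorm hNsum)
  refine le_of_forall_pos_le_add fun δ hδ => ?_
  have hSpos : 0 < (C+1)/δ := by positivity
  have h1 := key ((C+1)/δ) hSpos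
  have h2 : ((Dset k p).card : ℝ) - Msq^p ≤ C / ((C+1)/δ) := by
    rw [le_div_iff₀ hSpos]
    nlinarith [h1]
  have h3 : C / ((C+1)/δ) ≤ δ := by
    rw [div_div_eq_mul_div, div_le_iff₀ (by positivity)]
    nlinarith
  linarith

end KronAux

open KronAux

theorem kronecker (k : ℕ) (ξ α : Fin k → ℝ) (hξ : LinearIndependent ℚ ξ)
    (T ε : ℝ) (hT : 0 < T) (hε : 0 < ε) :
    ∃ t : ℝ, T < t ∧ ∃ p : Fin k → ℤ,
      ∀ m : Fin k, |t * ξ m - p m - α m| ≤ ε := by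
  by_contra Hfail
  push_neg at Hfail
  have hπ := Real.pi_pos
  rcases Nat.eq_zero_or_pos k with hk0 | hkpos
  · subst hk0
    obtain ⟨m, -⟩ := Hfail (T+1) (by linarith) (fun m => 0)
    exact m.elim0
  rcases lt_or_ge ε (1/2) with hε2 | hε2
  swap
  · obtain ⟨m, hm⟩ := Hfail (T+1) (by linarith)
      (fun m => round ((T+1) * ξ m - α m))
    have h1 := abs_sub_round ((T+1) * ξ m - α m)
    have h2 : (T+1) * ξ m - ↑(round ((T+1) * ξ m - α m)) - α m
        = ((T+1) * ξ m - α m) - round ((T+1) * ξ m - α m) := by ring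
    rw [h2] at hm
    linarith
  -- main case
  set γ := Real.cos (2*π*ε) with hγdef
  have hγ1 : γ < 1 := by
    rw [hγdef, ← Real.cos_zero]
    exact Real.cos_lt_cos_of_nonneg_of_le_pi le_rfl (by nlinarith) (by positivity)
  have StepA : ∀ t, T < t → ∃ m : Fin k,
      Real.cos (t * w ξ (some m) - w α (some m)) ≤ γ := by
    intro t ht
    obtain ⟨m, hm⟩ := Hfail t ht (fun m => round (t * ξ m - α m))
    refine ⟨m, ?_⟩
    have harg : t * w ξ (some m) - w α (some m) = 2*π*(t * ξ m - α m) := by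
      simp only [w, Option.elim]; ring
    rw [harg, hγdef]
    apply aux_cos ε _ hε hε2
    have h2 : t * ξ m - ↑(round (t * ξ m - α m)) - α m
        = (t * ξ m - α m) - round (t * ξ m - α m) := by ring
    rw [h2] at hm
    exact hm
  set Msq : ℝ := ((k:ℝ)+1)^2 - 2 + 2*γ with hMsqdef
  have StepB : ∀ t, T < t → Complex.normSq (F ξ α t) ≤ Msq := by
    intro t ht
    obtain ⟨m, hcos⟩ := StepA t ht
    have expand : Complex.normSq (F ξ α t)
        = ∑ oo : Option (Fin k) × Option (Fin k),
            (z ξ α t oo.1 * (starRingEnd ℂ) (z ξ α t oo.2)).re := by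
      have h1 : (Complex.normSq (F ξ α t) : ℝ)
          = (F ξ α t * (starRingEnd ℂ) (F ξ α t)).re := by
        rw [Complex.mul_conj]; simp
      rw [h1, F, map_sum, Finset.sum_mul_sum, Complex.re_sum,
        Fintype.sum_prod_type (f := fun oo : Option (Fin k) × Option (Fin k) =>
          (z ξ α t oo.1 * (starRingEnd ℂ) (z ξ α t oo.2)).re)]
      exact Finset.sum_congr rfl fun o _ => Complex.re_sum univ (fun j => z ξ α t o * (starRingEnd ℂ) (z ξ α t j))
    rw [expand]
    set sp : Finset (Option (Fin k) × Option (Fin k)) :=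
      {((none : Option (Fin k)), (some m : Option (Fin k))), (some m, none)} with hsp
    have hne : ((none : Option (Fin k)), (some m : Option (Fin k))) ≠ ((some m : Option (Fin k)), (none : Option (Fin k))) := by
      simp
    have hcardsp : sp.card = 2 := by
      rw [hsp, Finset.card_insert_of_notMem (by simp), Finset.card_singleton]
    have habs1 : ∀ oo : Option (Fin k) × Option (Fin k),
        (z ξ α t oo.1 * (starRingEnd ℂ) (z ξ α t oo.2)).re ≤ 1 := by
      intro oo
      refine (Complex.re_le_norm _).trans ?_
      rw [norm_mul, RCLike.norm_conj, z, z, Complex.norm_exp_ofReal_mul_I,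
        Complex.norm_exp_ofReal_mul_I, mul_one]
    have hzn : z ξ α t none = 1 := by
      simp [z, w]
    have hsp_sum : ∑ oo ∈ sp, (z ξ α t oo.1 * (starRingEnd ℂ) (z ξ α t oo.2)).re ≤ 2*γ := by
      rw [hsp, Finset.sum_insert (by simp), Finset.sum_singleton]
      have e1 : (z ξ α t none * (starRingEnd ℂ) (z ξ α t (some m))).re
          = Real.cos (t * w ξ (some m) - w α (some m)) := by
        rw [hzn, one_mul, Complex.conj_re, z, Complex.exp_ofReal_mul_I_re]
      have e2 : (z ξ α t (some m) * (starRingEnd ℂ) (z ξ α t none)).re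
          = Real.cos (t * w ξ (some m) - w α (some m)) := by
        rw [hzn, map_one, mul_one, z, Complex.exp_ofReal_mul_I_re]
      rw [e1, e2]
      linarith
    have hsplit := Finset.sum_sdiff (Finset.subset_univ sp)
      (f := fun oo : Option (Fin k) × Option (Fin k) =>
        (z ξ α t oo.1 * (starRingEnd ℂ) (z ξ α t oo.2)).re)
    rw [← hsplit]
    have hrest : ∑ oo ∈ univ \ sp, (z ξ α t oo.1 * (starRingEnd ℂ) (z ξ α t oo.2)).re
        ≤ ((k+1)^2 - 2 : ℝ) := by
      have hcard : ((univ \ sp).card : ℝ) = ((k:ℝ)+1)^2 - 2 := by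
        rw [Finset.card_sdiff_of_subset (Finset.subset_univ sp), hcardsp]
        have : (univ : Finset (Option (Fin k) × Option (Fin k))).card = (k+1)*(k+1) := by
          simp [Fintype.card_prod, Fintype.card_option]
        rw [this]
        have h2 : 2 ≤ (k+1)*(k+1) := by nlinarith
        push_cast [Nat.cast_sub h2]
        ring
      calc ∑ oo ∈ univ \ sp, (z ξ α t oo.1 * (starRingEnd ℂ) (z ξ α t oo.2)).re
          ≤ ((univ \ sp).card : ℝ) * 1 := by
            have hb := Finset.sum_le_card_nsmul (univ \ sp)
              (fun oo : Option (Fin k) × Option (Fin k) =>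
                (z ξ α t oo.1 * (starRingEnd ℂ) (z ξ α t oo.2)).re)
              1 (fun oo _ => habs1 oo)
            rw [nsmul_eq_mul] at hb
            exact hb
        _ = ((k:ℝ)+1)^2 - 2 := by rw [hcard, mul_one]
    rw [hMsqdef]
    linarith
  have hM0 : 0 ≤ Msq := le_trans (Complex.normSq_nonneg _) (StepB (T+1) (by linarith))
  have keyP : ∀ p : ℕ, ((k+1:ℝ))^(2*p) ≤ ((p+1:ℝ))^(k+1) * Msq^p := fun p =>
    (count_lb k p).trans (mul_le_mul_of_nonneg_left (analytic ξ α hξ T Msq StepB p)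
      (by positivity))
  have hMlt : Msq < ((k:ℝ)+1)^2 := by rw [hMsqdef]; nlinarith
  rcases eq_or_lt_of_le hM0 with h0 | h0
  · have h := keyP 1
    rw [← h0] at h
    norm_num at h
    nlinarith [h]
  · obtain ⟨r, hr1, hb⟩ : ∃ r : ℝ, 1 < r ∧ ∀ p : ℕ, r^p ≤ ((p+1:ℝ))^(k+1) := by
      refine ⟨((k:ℝ)+1)^2 / Msq, (one_lt_div h0).mpr hMlt, fun p => ?_⟩
      rw [div_pow, div_le_iff₀ (by positivity)]
      calc (((k:ℝ)+1)^2)^p = ((k+1:ℝ))^(2*p) := by rw [← pow_mul, mul_comm]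
        _ ≤ ((p+1:ℝ))^(k+1) * Msq^p := keyP p
    have hr0 : (0:ℝ) < r := by linarith
    have htends : Filter.Tendsto (fun p : ℕ => ((p:ℝ)+1)^(k+1) / r^(p+1))
        Filter.atTop (nhds 0) := by
      have h := (tendsto_pow_const_div_const_pow_of_one_lt (k+1) hr1).comp
        (Filter.tendsto_add_atTop_nat 1)
      have he : ((fun n : ℕ => (n:ℝ) ^ (k+1) / r ^ n) ∘ fun a => a + 1)
          = fun p : ℕ => ((p:ℝ)+1)^(k+1) / r^(p+1) := by
        funext p
        simp only [Function.comp]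
        push_cast
        ring_nf
      rwa [he] at h
    have htends2 : Filter.Tendsto (fun p : ℕ => ((p:ℝ)+1)^(k+1) / r^p)
        Filter.atTop (nhds 0) := by
      have h := htends.const_mul r
      rw [mul_zero] at h
      have he : (fun p : ℕ => r * (((p:ℝ)+1)^(k+1) / r^(p+1)))
          = fun p : ℕ => ((p:ℝ)+1)^(k+1) / r^p := by
        funext p
        rw [pow_succ]
        field_simp
        ring
      rwa [he] at h
    obtain ⟨p, hp⟩ := (htends2.eventually_lt_const one_pos).exists
    have hrp : (0:ℝ) < r^p := by positivity
    rw [div_lt_one hrp] at hp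
    have := hb p
    linarith
end

section
/- For every k ∈ ℕ and every a ∈ (0,1), there exist distinct positive speeds v_1 < v_2 < ... < v_k such that for all starting points β_1, ..., β_k ∈ [0,1) and every T > 0, there exists t > T such that (β_i + t·v_i) mod 1 ∈ [0, a] for all i = 1, ..., k. -/
private lemma fract_add_of (x d : ℝ) (hd : 0 ≤ d) (h : Int.fract x + d < 1) :
    Int.fract (x + d) = Int.fract x + d := by
  have hx : x + d = (⌊x⌋ : ℝ) + (Int.fract x + d) := by
    rw [Int.fract]; ring
  rw [hx, Int.fract_intCast_add,
    Int.fract_eq_self.mpr ⟨add_nonneg (Int.fract_nonneg x) hd, h⟩]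

private lemma aux (k : ℕ) : ∀ a : ℝ, 0 < a → a < 1 →
    ∃ (v : Fin k → ℝ) (M : ℝ), 0 < M ∧ StrictMono v ∧ (∀ i, 0 < v i) ∧
      (∀ i, v i ≤ M) ∧
      ∀ β : Fin k → ℝ, ∀ T : ℝ, 0 < T → ∃ t : ℝ, T < t ∧
        ∀ i, Int.fract (β i + t * v i) ∈ Set.Icc 0 a := by
  induction k with
  | zero =>
    intro a ha0 ha1
    exact ⟨Fin.elim0, 1, one_pos, fun i => i.elim0, fun i => i.elim0,
      fun i => i.elim0, fun β T hT => ⟨T + 1, by linarith, fun i => i.elim0⟩⟩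
  | succ k ih =>
    intro a ha0 ha1
    obtain ⟨v, M, hM, hmono, hpos, hle, hprop⟩ :=
      ih (a / 2) (by linarith) (by linarith)
    set V : ℝ := 2 * M / a with hV
    have hVpos : 0 < V := by positivity
    have hMV : M < V := by
      rw [hV, lt_div_iff₀ ha0]; nlinarith
    have hsnoc_lt : ∀ i : Fin k, v i < V := fun i => lt_of_le_of_lt (hle i) hMV
    refine ⟨Fin.snoc v V, V, hVpos, ?_, ?_, ?_, ?_⟩
    · -- StrictMono
      intro i j hij
      rcases Fin.eq_castSucc_or_eq_last j with ⟨j', rfl⟩ | rfl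
      · have hi : i ≠ Fin.last k := by
          intro h; subst h
          exact absurd (lt_trans hij (Fin.castSucc_lt_last j')) (lt_irrefl _)
        obtain ⟨i', rfl⟩ := Fin.exists_castSucc_eq.mpr hi
        simp only [Fin.snoc_castSucc]
        exact hmono (Fin.castSucc_lt_castSucc_iff.mp hij)
      · have hi : i ≠ Fin.last k := Fin.ne_last_of_lt hij
        obtain ⟨i', rfl⟩ := Fin.exists_castSucc_eq.mpr hi
        rw [Fin.snoc_castSucc, Fin.snoc_last]
        exact hsnoc_lt i'
    · -- positivity
      intro i
      rcases Fin.eq_castSucc_or_eq_last i with ⟨i', rfl⟩ | rfl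
      · rw [Fin.snoc_castSucc]; exact hpos i'
      · rw [Fin.snoc_last]; exact hVpos
    · -- bounded by V
      intro i
      rcases Fin.eq_castSucc_or_eq_last i with ⟨i', rfl⟩ | rfl
      · rw [Fin.snoc_castSucc]; exact le_of_lt (hsnoc_lt i')
      · rw [Fin.snoc_last]
    · -- main property
      intro β T hT
      obtain ⟨t, htT, hmem⟩ := hprop (fun j => β (Fin.castSucc j)) T hT
      set x : ℝ := β (Fin.last k) + t * V with hx
      set c : ℝ := Int.fract x with hc
      have hc0 : 0 ≤ c := Int.fract_nonneg x
      have hc1 : c < 1 := Int.fract_lt_one x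
      by_cases hca : c ≤ a
      · refine ⟨t, htT, ?_⟩
        intro i
        rcases Fin.eq_castSucc_or_eq_last i with ⟨i', rfl⟩ | rfl
        · rw [Fin.snoc_castSucc]
          obtain ⟨h1, h2⟩ := hmem i'
          exact ⟨h1, by linarith⟩
        · rw [Fin.snoc_last]
          exact ⟨hc0, hca⟩
      · push_neg at hca
        set e : ℝ := (1 - c) * (a / (2 * M)) with he
        have he0 : 0 < e := by
          have : (0:ℝ) < a / (2 * M) := by positivity
          nlinarith
        refine ⟨t + e, by linarith, ?_⟩
        intro i
        rcases Fin.eq_castSucc_or_eq_last i with ⟨i', rfl⟩ | rfl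
        · rw [Fin.snoc_castSucc]
          have hd0 : 0 ≤ e * v i' := le_of_lt (mul_pos he0 (hpos i'))
          have hdle : e * v i' ≤ a / 2 := by
            have h1 : e ≤ a / (2 * M) := by
              rw [he]
              have : (0:ℝ) < a / (2 * M) := by positivity
              nlinarith
            calc e * v i' ≤ (a / (2 * M)) * M := by
                  apply mul_le_mul h1 (hle i') (le_of_lt (hpos i'))
                  positivity
              _ = a / 2 := by field_simp
          have hrw : β (Fin.castSucc i') + (t + e) * v i'
              = (β (Fin.castSucc i') + t * v i') + e * v i' := by ring
          rw [hrw, fract_add_of _ _ hd0 ?_]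
          · obtain ⟨h1, h2⟩ := hmem i'
            constructor
            · linarith
            · linarith
          · obtain ⟨h1, h2⟩ := hmem i'
            linarith
        · rw [Fin.snoc_last]
          have hrw : β (Fin.last k) + (t + e) * V = x + (1 - c) := by
            rw [hx, he, hV]
            field_simp
            ring
          have hint : x + (1 - c) = ((⌊x⌋ + 1 : ℤ) : ℝ) := by
            rw [hc, Int.fract]
            push_cast
            ring
          rw [hrw, hint, Int.fract_intCast]
          exact ⟨le_refl 0, le_of_lt ha0⟩

theorem exists_speeds_in_shade (k : ℕ) (a : ℝ) (ha0 : 0 < a) (ha1 : a < 1) :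
    ∃ v : Fin k → ℝ, StrictMono v ∧ (∀ i, 0 < v i) ∧
      ∀ β : Fin k → ℝ, (∀ i, β i ∈ Set.Ico (0 : ℝ) 1) →
        ∀ T : ℝ, 0 < T → ∃ t : ℝ, T < t ∧
          ∀ i, Int.fract (β i + t * v i) ∈ Set.Icc 0 a := by
  obtain ⟨v, M, _, hmono, hpos, _, hprop⟩ := aux k a ha0 ha1
  exact ⟨v, hmono, hpos, fun β _ T hT => hprop β T hT⟩
end

section
/- Let 0 < a < 1 and v > 0. Suppose at time t a runner with speed (2/a)·v starts at an arbitrary point β ∈ [0,1) on the unit circle, and suppose a point moving at speed at most v lies in [0, a/2] at time t. Then there exists s ∈ [t, t + a/(2v)] such that the fast runner's position (β + s·(2v/a)) mod 1 lies in [0, a], and the slow point's position still lies in [0, a] at time s. -/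
theorem fast_runner_catches (a v : ℝ) (ha0 : 0 < a) (ha1 : a < 1) (hv : 0 < v)
    (t : ℝ) (β : ℝ) (hβ : β ∈ Set.Ico (0 : ℝ) 1)
    (g : ℝ → ℝ) (hmono : Monotone g)
    (hspeed : ∀ s₁ s₂ : ℝ, s₁ ≤ s₂ → g s₂ - g s₁ ≤ v * (s₂ - s₁))
    (hg : Int.fract (g t) ∈ Set.Icc 0 (a / 2)) :
    ∃ s ∈ Set.Icc t (t + a / (2 * v)),
      Int.fract (β + s * (2 * v / a)) ∈ Set.Icc 0 a ∧
      Int.fract (g s) ∈ Set.Icc 0 a := by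
  set c : ℝ := 2 * v / a with hc
  have hcpos : 0 < c := by positivity
  set s : ℝ := ((⌈β + t * c⌉ : ℝ) - β) / c with hs
  have hval : β + s * c = (⌈β + t * c⌉ : ℝ) := by
    rw [hs, div_mul_cancel₀ _ hcpos.ne']; ring
  have hst : t ≤ s := by
    rw [hs, le_div_iff₀ hcpos]
    have := Int.le_ceil (β + t * c)
    linarith
  have hs2 : s ≤ t + a / (2 * v) := by
    have hinv : a / (2 * v) = 1 / c := by
      rw [hc]; field_simp
    rw [hinv, hs, div_le_iff₀ hcpos]
    have h1 : (t + 1 / c) * c = t * c + 1 := by field_simp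
    have := Int.ceil_lt_add_one (β + t * c)
    linarith
  refine ⟨s, ⟨hst, hs2⟩, ?_, ?_⟩
  · rw [hval, Int.fract_intCast]
    exact ⟨le_refl 0, ha0.le⟩
  · have hgmove : g s - g t ≤ a / 2 := by
      have h1 := hspeed t s hst
      have h2 : v * (s - t) ≤ v * (a / (2 * v)) := by
        apply mul_le_mul_of_nonneg_left _ hv.le
        linarith
      have h3 : v * (a / (2 * v)) = a / 2 := by field_simp
      linarith
    have hge : g t ≤ g s := hmono hst
    have hfl : (⌊g t⌋ : ℝ) ≤ g s ∧ g s < (⌊g t⌋ : ℝ) + 1 := by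
      have h1 : Int.fract (g t) = g t - ⌊g t⌋ := rfl
      obtain ⟨hg0, hg1⟩ := hg
      rw [h1] at hg0 hg1
      constructor <;> linarith
    have hfloor : ⌊g s⌋ = ⌊g t⌋ := by
      rw [Int.floor_eq_iff]
      exact hfl
    have h1 : Int.fract (g s) = g s - ⌊g t⌋ := by
      rw [Int.fract, hfloor]
    rw [h1]
    obtain ⟨hg0, hg1⟩ := hg
    have h2 : Int.fract (g t) = g t - ⌊g t⌋ := rfl
    rw [h2] at hg0 hg1
    constructor <;> linarith
end
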